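/- For all n ≥ 2, sr(n) equals the largest index ℓ with nonzero entry in Tchouk_{n−1}, plus 1; equivalently, sr(n) = 1 + length(Tchouk_{n−1}) = 1 + final(Tchouk_{n−1}), where final denotes the last nonzero entry. -/

import Mathlib

/-- The next value in the strange-root process: the least integer `z` with
`(i+1)*z > i*(y+1)`. -/
def srStep (i y : ℕ) : ℕ := i * (y + 1) / (i + 1) + 1

/-- `srY n i` is the second coordinate `y_i` of the `i`-th pair of the
strange-root process started at `⟨1, n⟩` (indices start at 1). -/
def srY (n : ℕ) : ℕ → ℕ
  | 0 => n
  | 1 => n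
  | (i+2) => srStep (i+1) (srY n (i+1))

/-- The strange root of `n`: the first index `r ≥ 1` with `y_r ≤ r`. -/
noncomputable def sr (n : ℕ) : ℕ := sInf {r | 1 ≤ r ∧ srY n r ≤ r}

/-- A move of Tchoukaillon solitaire: select a hole `i ≥ 1` containing
`0 < c i ≤ i` stones, empty it, and add one stone to each of holes
`i - c i, …, i - 1` (a stone reaching hole `0` goes to the pit and
is not recorded). -/
def TchoukMove (c c' : ℕ → ℕ) : Prop :=
  ∃ i, 1 ≤ i ∧ 0 < c i ∧ c i ≤ i ∧
    ∀ j, c' j = if j = i then 0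
      else if 1 ≤ j ∧ i - c i ≤ j ∧ j < i then c j + 1 else c j

/-- A configuration (finitely supported, holes indexed from 1) is winning if
some sequence of moves empties all the holes. -/
def TchoukWinning (c : ℕ → ℕ) : Prop :=
  c 0 = 0 ∧ (Function.support c).Finite ∧
    Relation.ReflTransGen TchoukMove c (fun _ => 0)

/-- Auxiliary: `(tchoukAux n k).1 = c_k` and `(tchoukAux n k).2 = c_1 + ⋯ + c_k`
where `c_k = (n - (c_1 + ⋯ + c_{k-1})) % (k+1)`. -/
def tchoukAux (n : ℕ) : ℕ → ℕ × ℕ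
  | 0 => (0, 0)
  | (k+1) =>
      ((n - (tchoukAux n k).2) % (k + 2),
        (tchoukAux n k).2 + (n - (tchoukAux n k).2) % (k + 2))

/-- `tchouk n k` is the number of stones in hole `k` of the winning
Tchoukaillon configuration `Tchouk_n` (with `tchouk n 0 = 0`). -/
def tchouk (n k : ℕ) : ℕ := (tchoukAux n k).1

lemma tchoukAux_snd_le (m : ℕ) : ∀ k, (tchoukAux m k).2 ≤ m := by
  intro k
  induction k with
  | zero => simp [tchoukAux]
  | succ k ih =>
    have h := Nat.mod_le (m - (tchoukAux m k).2) (k + 2)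
    simp only [tchoukAux]
    omega

lemma tchoukAux_snd_mono (m : ℕ) : Monotone fun k => (tchoukAux m k).2 := by
  apply monotone_nat_of_le_succ
  intro k
  simp only [tchoukAux]
  omega

lemma srY_invariant (m : ℕ) : ∀ i,
    (i + 1) * srY (m + 1) (i + 1) = (m - (tchoukAux m i).2) + (i + 1) * (i + 1) := by
  intro i
  induction i with
  | zero => simp [srY, tchoukAux]
  | succ i ih =>
    set r := m - (tchoukAux m i).2 with hr
    set a := srY (m + 1) (i + 1) with ha
    have hstep : srY (m + 1) (i + 2) = (i + 1) * (a + 1) / (i + 2) + 1 := by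
      simp [srY, srStep, ha]
    have hq := Nat.div_add_mod r (i + 2)
    set q := r / (i + 2) with hqq
    set e := r % (i + 2) with he
    have he2 : e < i + 2 := Nat.mod_lt _ (by omega)
    have hnum : (i + 1) * (a + 1) = (i + 2) * (q + (i + 1)) + e := by
      have h1 : (i + 1) * (a + 1) = (i + 1) * a + (i + 1) := by ring
      have h2 : (i + 2) * (q + (i + 1)) = (i + 2) * q + (i + 2) * (i + 1) := by ring
      have h3 : (i + 1) * (i + 1) + (i + 1) = (i + 2) * (i + 1) := by ring
      omega
    have hdiv : (i + 1) * (a + 1) / (i + 2) = q + (i + 1) := by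
      rw [hnum, Nat.mul_add_div (by omega), Nat.div_eq_of_lt he2]
      omega
    have hsnd : (tchoukAux m (i + 1)).2 = (tchoukAux m i).2 + e := by
      simp only [tchoukAux]
      rfl
    have hle := tchoukAux_snd_le m i
    have hrem : m - (tchoukAux m (i + 1)).2 = (i + 2) * q := by omega
    rw [hstep, hdiv, hrem]
    ring

lemma tchoukAux_snd_stable (m l : ℕ) (h2 : ∀ k, l < k → tchouk m k = 0) :
    ∀ k, l ≤ k → (tchoukAux m k).2 = (tchoukAux m l).2 := by
  intro k hk
  induction k with
  | zero =>
    have : l = 0 := Nat.le_zero.mp hk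
    subst this; rfl
  | succ k ih =>
    rcases Nat.lt_or_ge l (k + 1) with h | h
    · have hz : (m - (tchoukAux m k).2) % (k + 2) = 0 := h2 _ h
      have heq : (tchoukAux m (k + 1)).2 = (tchoukAux m k).2 := by
        simp only [tchoukAux]; omega
      rw [heq]
      exact ih (by omega)
    · have : l = k + 1 := by omega
      rw [this]

theorem sr_eq_tchouk_length_final (n : ℕ) (hn : 2 ≤ n) (l : ℕ)
    (h1 : tchouk (n - 1) l ≠ 0) (h2 : ∀ k, l < k → tchouk (n - 1) k = 0) :
    sr n = l + 1 ∧ sr n = tchouk (n - 1) l + 1 := by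
  set m := n - 1 with hm
  have hnm : n = m + 1 := by omega
  have hl1 : 1 ≤ l := by
    by_contra h
    have : l = 0 := by omega
    apply h1; rw [this]; rfl
  obtain ⟨l', rfl⟩ : ∃ l', l = l' + 1 := ⟨l - 1, by omega⟩
  have hSle : ∀ k, (tchoukAux m k).2 ≤ m := tchoukAux_snd_le m
  have hstab := tchoukAux_snd_stable m (l' + 1) h2
  -- S (l'+1) = m
  have hSl : (tchoukAux m (l' + 1)).2 = m := by
    set K := l' + m + 1 with hK
    have hz : (m - (tchoukAux m K).2) % (K + 2) = 0 := h2 (K + 1) (by omega)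
    have hSK : (tchoukAux m K).2 = (tchoukAux m (l' + 1)).2 := hstab K (by omega)
    have hlt : m - (tchoukAux m K).2 < K + 2 := by have := hSle K; omega
    have := Nat.mod_eq_of_lt hlt
    have := hSle (l' + 1)
    omega
  have hcl : tchouk m (l' + 1) = (m - (tchoukAux m l').2) % (l' + 2) := rfl
  have hsnd : (tchoukAux m (l' + 1)).2
      = (tchoukAux m l').2 + (m - (tchoukAux m l').2) % (l' + 2) := by
    simp only [tchoukAux]
  set r := m - (tchoukAux m l').2 with hr
  have hrpos : 0 < r := by
    by_contra h
    apply h1; rw [hcl]; omega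
  have hrl : r % (l' + 2) = r := by have := hSle l'; omega
  have hrle : r ≤ l' + 1 := by
    have := Nat.mod_lt r (show 0 < l' + 2 by omega)
    omega
  have hinv := srY_invariant m l'
  rw [← hnm, ← hr] at hinv
  have hyge : l' + 1 < srY n (l' + 1) := by
    by_contra h
    push_neg at h
    have : (l' + 1) * srY n (l' + 1) ≤ (l' + 1) * (l' + 1) :=
      Nat.mul_le_mul_left _ h
    omega
  have hrge : l' + 1 ≤ r := by
    have h1' : (l' + 1) * (l' + 2) ≤ (l' + 1) * srY n (l' + 1) :=
      Nat.mul_le_mul_left _ hyge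
    have h2' : (l' + 1) * (l' + 2) = (l' + 1) * (l' + 1) + (l' + 1) := by ring
    omega
  have hreq : r = l' + 1 := by omega
  have hinv2 := srY_invariant m (l' + 1)
  rw [← hnm, hSl] at hinv2
  have hy2 : srY n (l' + 2) = l' + 2 := by
    have h0 : m - m = 0 := by omega
    rw [h0, zero_add] at hinv2
    exact Nat.eq_of_mul_eq_mul_left (by omega) hinv2
  have hmem : l' + 2 ∈ {r | 1 ≤ r ∧ srY n r ≤ r} := ⟨by omega, le_of_eq hy2⟩
  have hlb : ∀ b ∈ {r | 1 ≤ r ∧ srY n r ≤ r}, l' + 2 ≤ b := by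
    rintro b ⟨hb1, hb2⟩
    by_contra h
    push_neg at h
    obtain ⟨j, rfl⟩ : ∃ j, b = j + 1 := ⟨b - 1, by omega⟩
    have hinvj := srY_invariant m j
    rw [← hnm] at hinvj
    have hmul : (j + 1) * srY n (j + 1) ≤ (j + 1) * (j + 1) :=
      Nat.mul_le_mul_left _ hb2
    have hSj : m ≤ (tchoukAux m j).2 := by omega
    have hmono : (tchoukAux m j).2 ≤ (tchoukAux m l').2 :=
      tchoukAux_snd_mono m (show j ≤ l' by omega)
    omega
  have hsr : sr n = l' + 2 := by
    apply le_antisymm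
    · exact Nat.sInf_le hmem
    · exact le_csInf ⟨_, hmem⟩ hlb
  refine ⟨hsr, ?_⟩
  rw [hsr, hcl]
  omega
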